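/- For any transposition (a₁ a₂) in Sₙ, and two additional symbols x = n+1 and y = n+2, the inverse of (a₁ a₂) equals the product (x y)(x a₂)(y a₁)(y a₂)(x a₁), and all five transpositions in the product are pairwise distinct and each involves x or y. -/

import Mathlib

theorem stmt0 (n a₁ a₂ : ℕ) (ha₁ : 1 ≤ a₁) (ha₁n : a₁ ≤ n)
    (ha₂ : 1 ≤ a₂) (ha₂n : a₂ ≤ n) (hne : a₁ ≠ a₂) :
    (Equiv.swap a₁ a₂)⁻¹ =
      Equiv.swap (n+1) (n+2) * Equiv.swap (n+1) a₂ * Equiv.swap (n+2) a₁ *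
        Equiv.swap (n+2) a₂ * Equiv.swap (n+1) a₁ ∧
    ([Equiv.swap (n+1) (n+2), Equiv.swap (n+1) a₂, Equiv.swap (n+2) a₁,
        Equiv.swap (n+2) a₂, Equiv.swap (n+1) a₁] : List (Equiv.Perm ℕ)).Pairwise (· ≠ ·) ∧
    ∀ t ∈ ([Equiv.swap (n+1) (n+2), Equiv.swap (n+1) a₂, Equiv.swap (n+2) a₁,
        Equiv.swap (n+2) a₂, Equiv.swap (n+1) a₁] : List (Equiv.Perm ℕ)),
      t (n+1) ≠ n+1 ∨ t (n+2) ≠ n+2 := by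
  have hx1 : a₁ ≠ n+1 := by omega
  have hx2 : a₁ ≠ n+2 := by omega
  have hy1 : a₂ ≠ n+1 := by omega
  have hy2 : a₂ ≠ n+2 := by omega
  have hxy : (n:ℕ)+1 ≠ n+2 := by omega
  refine ⟨?_, ?_, ?_⟩
  · ext z
    simp only [Equiv.swap_inv, Equiv.Perm.mul_apply]
    by_cases h1 : z = a₁
    · subst h1
      simp [Equiv.swap_apply_def, hne, hne.symm, hx1, hx2, hy1, hy2, hxy,
        hx1.symm, hx2.symm, hy1.symm, hy2.symm, hxy.symm]
    by_cases h2 : z = a₂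
    · subst h2
      simp [Equiv.swap_apply_def, hne, hne.symm, hx1, hx2, hy1, hy2, hxy,
        hx1.symm, hx2.symm, hy1.symm, hy2.symm, hxy.symm]
    by_cases h3 : z = n+1
    · subst h3
      simp [Equiv.swap_apply_def, hne, hne.symm, hx1, hx2, hy1, hy2, hxy,
        hx1.symm, hx2.symm, hy1.symm, hy2.symm, hxy.symm]
    by_cases h4 : z = n+2
    · subst h4
      simp [Equiv.swap_apply_def, hne, hne.symm, hx1, hx2, hy1, hy2, hxy,
        hx1.symm, hx2.symm, hy1.symm, hy2.symm, hxy.symm]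
    · simp [Equiv.swap_apply_def, h1, h2, h3, h4]
  · have key : ∀ (i j k l w : ℕ), Equiv.swap i j w ≠ Equiv.swap k l w →
        Equiv.swap i j ≠ Equiv.swap k l := by
      intro i j k l w hw h
      exact hw (by rw [h])
    refine List.Pairwise.cons ?_ (List.Pairwise.cons ?_ (List.Pairwise.cons ?_
      (List.Pairwise.cons ?_ (List.Pairwise.cons (fun t ht => absurd ht
        (List.not_mem_nil (a := t))) List.Pairwise.nil))))
    · rintro t ht
      simp only [List.mem_cons, List.not_mem_nil, or_false] at ht
      rcases ht with rfl|rfl|rfl|rfl <;>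
      · refine key _ _ _ _ (n+2) ?_
        simp only [Equiv.swap_apply_def]
        split_ifs <;> omega
    · rintro t ht
      simp only [List.mem_cons, List.not_mem_nil, or_false] at ht
      rcases ht with rfl|rfl|rfl
      · refine key _ _ _ _ (n+1) ?_
        simp only [Equiv.swap_apply_def]; split_ifs <;> omega
      · refine key _ _ _ _ (n+1) ?_
        simp only [Equiv.swap_apply_def]; split_ifs <;> omega
      · refine key _ _ _ _ a₂ ?_
        simp only [Equiv.swap_apply_def]; split_ifs <;> omega
    · rintro t ht
      simp only [List.mem_cons, List.not_mem_nil, or_false] at ht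
      rcases ht with rfl|rfl
      · refine key _ _ _ _ a₁ ?_
        simp only [Equiv.swap_apply_def]; split_ifs <;> omega
      · refine key _ _ _ _ (n+2) ?_
        simp only [Equiv.swap_apply_def]; split_ifs <;> omega
    · rintro t ht
      simp only [List.mem_cons, List.not_mem_nil, or_false] at ht
      rcases ht with rfl
      refine key _ _ _ _ (n+2) ?_
      simp only [Equiv.swap_apply_def]; split_ifs <;> omega
  · intro t ht
    simp only [List.mem_cons, List.not_mem_nil, or_false] at ht
    rcases ht with rfl|rfl|rfl|rfl|rfl <;>
      simp only [Equiv.swap_apply_def] <;> split_ifs <;> omega
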